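/- Let φ^k_{j,m} and ψ^k_{j,m} be Jordan chains of 𝒜(λ) and 𝒜*(λ) at an eigenvalue λ_k satisfying the periodic (integrated) biorthogonality relations (φ^k_{j,m}, ψ^k_{J,m_{k,J}-1-M})_{𝒴̂} = δ_j^J δ_m^M. Then the pointwise orthogonality holds: for every t ∈ ℝ, (φ^k_{j,m_{k,j}-1-m}(t), ψ^k_{J,M}(t))_Y = δ_j^J δ_m^M. -/

import Mathlib

open MeasureTheory

/-- Lemma 5.2 at a single eigenvalue: if the Jordan chains
`φ^k_{j,·}` of `𝒜(λ)` and `ψ^k_{j,·}` of `𝒜*(λ)` at the eigenvalue `λ_k` satisfy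
the integrated biorthogonality relations
`(φ_{j,m}, ψ_{J, m_J-1-M})_{𝒴̂} = δ_j^J δ_m^M`, then the pointwise relations
`(φ_{j, m_j-1-m}(t), ψ_{J,M}(t))_Y = δ_j^J δ_m^M` hold for every `t ∈ ℝ`. -/
theorem stmt8
    {X Y : Type*} [NormedAddCommGroup X] [InnerProductSpace ℂ X] [CompleteSpace X]
    [NormedAddCommGroup Y] [InnerProductSpace ℂ Y] [CompleteSpace Y]
    (e : X →L[ℂ] Y) (A : ℝ → X →L[ℂ] Y) (hAper : ∀ t, A (t + 1) = A t)
    (lamk : ℂ) (Jn : ℕ) (mlen : Fin Jn → ℕ) (hmlen : ∀ j, 1 ≤ mlen j)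
    (φ : Fin Jn → ℕ → ℝ → X) (φ' : Fin Jn → ℕ → ℝ → Y)
    (ψ ψ' : Fin Jn → ℕ → ℝ → Y)
    (hφper : ∀ j mm, Function.Periodic (φ j mm) 1)
    (hψper : ∀ j mm, Function.Periodic (ψ j mm) 1)
    (hφderiv : ∀ j mm, mm < mlen j → ∀ t, HasDerivAt (fun s => e (φ j mm s)) (φ' j mm t) t)
    (hψderiv : ∀ j mm, mm < mlen j → ∀ t, HasDerivAt (ψ j mm) (ψ' j mm t) t)
    -- Jordan chain equations for 𝒜(λ_k):
    (hφchain : ∀ j mm, mm < mlen j → ∀ t,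
      φ' j mm t + A t (φ j mm t) + lamk • e (φ j mm t)
        + (if mm = 0 then 0 else e (φ j (mm - 1) t)) = 0)
    -- Jordan chain equations for 𝒜*(λ_k), tested against X:
    (hψchain : ∀ j mm, mm < mlen j → ∀ (x : X) (t : ℝ),
      (inner ℂ (ψ' j mm t) (e x) : ℂ) =
        (inner ℂ (ψ j mm t) ((A t x : Y)) : ℂ) + lamk * (inner ℂ (ψ j mm t) (e x) : ℂ)
          + (inner ℂ (if mm = 0 then (0 : Y) else ψ j (mm - 1) t) (e x) : ℂ))
    -- integrated biorthogonality (4.14):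
    (hbi : ∀ j J mm MM, mm < mlen j → MM < mlen J →
      (∫ t in (0:ℝ)..1, (inner ℂ (ψ J (mlen J - 1 - MM) t) (e (φ j mm t)) : ℂ)) =
        if j = J ∧ mm = MM then 1 else 0) :
    ∀ j J mm MM, mm < mlen j → MM < mlen J → ∀ t : ℝ,
      (inner ℂ (ψ J MM t) (e (φ j (mlen j - 1 - mm) t)) : ℂ) =
        if j = J ∧ mm = MM then 1 else 0 := by
  suffices h : ∀ s : ℕ, ∀ j J mm MM, mm < mlen j → MM < mlen J →
      MM + (mlen j - 1 - mm) = s → ∀ t : ℝ,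
      (inner ℂ (ψ J MM t) (e (φ j (mlen j - 1 - mm) t)) : ℂ) =
        if j = J ∧ mm = MM then 1 else 0 by
    intro j J mm MM hm hM t
    exact h _ j J mm MM hm hM rfl t
  intro s
  induction s using Nat.strong_induction_on with
  | _ s IH =>
  intro j J mm MM hm hM hs t
  set m := mlen j - 1 - mm with hmdef
  have hmlt : m < mlen j := lt_of_le_of_lt (Nat.sub_le _ _) (Nat.sub_lt (hmlen j) one_pos)
  set G : ℝ → ℂ := fun u => (inner ℂ (ψ J MM u) (e (φ j m u)) : ℂ) with hGdef
  -- the derivative of G vanishes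
  have hG : ∀ u : ℝ, HasDerivAt G 0 u := by
    intro u
    have hd : HasDerivAt G
        ((inner ℂ (ψ J MM u) (φ' j m u) : ℂ) + (inner ℂ (ψ' J MM u) (e (φ j m u)) : ℂ)) u :=
      (hψderiv J MM hM u).inner ℂ (hφderiv j m hmlt u)
    have h1' : (inner ℂ (ψ J MM u) (φ' j m u) : ℂ)
        + (inner ℂ (ψ J MM u) (A u (φ j m u)) : ℂ)
        + lamk * (inner ℂ (ψ J MM u) (e (φ j m u)) : ℂ)
        + (inner ℂ (ψ J MM u) (if m = 0 then (0:Y) else e (φ j (m-1) u)) : ℂ) = 0 := by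
      simp only [← inner_smul_right, ← inner_add_right]
      rw [hφchain j m hmlt u, inner_zero_right]
    have h2 := hψchain J MM hM (φ j m u) u
    have hval : (inner ℂ (ψ J MM u) (φ' j m u) : ℂ) + (inner ℂ (ψ' J MM u) (e (φ j m u)) : ℂ)
        = (inner ℂ (if MM = 0 then (0:Y) else ψ J (MM-1) u) (e (φ j m u)) : ℂ)
          - (inner ℂ (ψ J MM u) (if m = 0 then (0:Y) else e (φ j (m-1) u)) : ℂ) := by
      linear_combination h1' + h2
    have hV : (inner ℂ (if MM = 0 then (0:Y) else ψ J (MM-1) u) (e (φ j m u)) : ℂ)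
        - (inner ℂ (ψ J MM u) (if m = 0 then (0:Y) else e (φ j (m-1) u)) : ℂ) = 0 := by
      have hfirst : (inner ℂ (if MM = 0 then (0:Y) else ψ J (MM-1) u) (e (φ j m u)) : ℂ)
          = if j = J ∧ mm = MM - 1 ∧ MM ≠ 0 then 1 else 0 := by
        by_cases hMM : MM = 0
        · simp [hMM]
        · rw [if_neg hMM]
          have := IH (s-1) (by omega) j J mm (MM-1) hm (by omega) (by omega) u
          rw [← hmdef] at this
          rw [this]
          by_cases hjJ : j = J <;> by_cases hmmMM : mm = MM - 1 <;> simp [hjJ, hmmMM, hMM]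
      have hsecond : (inner ℂ (ψ J MM u) (if m = 0 then (0:Y) else e (φ j (m-1) u)) : ℂ)
          = if j = J ∧ mm = MM - 1 ∧ MM ≠ 0 then 1 else 0 := by
        by_cases hm0 : m = 0
        · rw [if_pos hm0, inner_zero_right]
          by_cases hjJ : j = J
          · subst hjJ
            have : ¬ (mm = MM - 1 ∧ MM ≠ 0) := by omega
            simp [this]
          · simp [hjJ]
        · rw [if_neg hm0]
          have hmm1 : mm + 1 < mlen j := by omega
          have heq : m - 1 = mlen j - 1 - (mm+1) := by omega
          have := IH (s-1) (by omega) j J (mm+1) MM hmm1 hM (by omega) u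
          rw [← heq] at this
          rw [this]
          refine if_congr ?_ rfl rfl
          constructor <;> rintro ⟨h1, h2⟩ <;> exact ⟨h1, by omega⟩
      rw [hfirst, hsecond, sub_self]
    rw [hval, hV] at hd
    exact hd
  have hconst : ∀ t₁ t₂ : ℝ, G t₁ = G t₂ := fun t₁ t₂ =>
    is_const_of_deriv_eq_zero (fun x => (hG x).differentiableAt) (fun x => (hG x).deriv) t₁ t₂
  have hint : (∫ u in (0:ℝ)..1, G u) = G t := by
    rw [intervalIntegral.integral_congr (g := fun _ => G t) (fun u _ => hconst u t)]
    simp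
  have hMM' : mlen J - 1 - (mlen J - 1 - MM) = MM := by omega
  have hbi' := hbi j J m (mlen J - 1 - MM) hmlt
    (lt_of_le_of_lt (Nat.sub_le _ _) (Nat.sub_lt (hmlen J) one_pos))
  rw [hMM'] at hbi'
  have hbi'' : (∫ u in (0:ℝ)..1, G u) = if j = J ∧ m = mlen J - 1 - MM then 1 else 0 := hbi'
  rw [show (inner ℂ (ψ J MM t) (e (φ j m t)) : ℂ) = G t from rfl, ← hint, hbi'']
  refine if_congr ?_ rfl rfl
  constructor <;> rintro ⟨h1, h2⟩ <;> subst h1 <;> exact ⟨rfl, by omega⟩
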